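/- Fix k ≥ 1. The number of unordered k-tuples of unordered pairs of elements of I_N all having the same sum, where all 2k elements involved are distinct, satisfies ξ_{1,k}(N) = ∑_{n=0}^{2N} C(R(n),k), where R(n) is the number of representations of n as a sum of two distinct elements of I_N; and ξ_{1,k}(N)/N^{k+1} → 4/(2^{k+1}(k+1)!) as N → ∞. -/

import Mathlib

open scoped Classical
open Finset Filter Nat

/-- The number of representations of `n` as an ordered sum of two distinct
elements of `{0, ..., N}` with the smaller first. -/
lemma card_pairs_eq (N n : ℕ) (hn : n ≤ 2 * N) :
    (((Finset.Icc 0 N ×ˢ Finset.Icc 0 N).filter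
      (fun q : ℕ × ℕ => q.1 < q.2 ∧ q.1 + q.2 = n)).card = (n + 1) / 2 - (n - N)) := by
  have h := Finset.card_bij (s := Finset.Ico (n - N) ((n + 1) / 2))
    (t := ((Finset.Icc 0 N ×ˢ Finset.Icc 0 N).filter
      (fun q : ℕ × ℕ => q.1 < q.2 ∧ q.1 + q.2 = n)))
    (fun a _ => (a, n - a))
    (by
      intro a ha
      simp only [Finset.mem_Ico] at ha
      simp only [Finset.mem_filter, Finset.mem_product, Finset.mem_Icc]
      omega)
    (by
      intro a₁ h₁ a₂ h₂ h
      exact (Prod.mk.injEq _ _ _ _).mp h |>.1)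
    (by
      rintro ⟨a, b⟩ hb
      simp only [Finset.mem_filter, Finset.mem_product, Finset.mem_Icc] at hb
      refine ⟨a, ?_, ?_⟩
      · simp only [Finset.mem_Ico]; omega
      · simp only [Prod.mk.injEq, true_and]; omega)
  rw [← h, Nat.card_Ico]

/-- Hockey-stick style closed form for the partial sums of `((n+1)/2).choose k`. -/
lemma A_eq (k N : ℕ) (hk : 1 ≤ k) :
    ∑ n ∈ Finset.range N, ((n + 1) / 2).choose k
      = (N / 2 + 1).choose (k + 1) + ((N + 1) / 2).choose (k + 1) := by
  induction N with
  | zero =>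
      simp [Nat.choose_eq_zero_of_lt (by omega : 1 < k + 1)]
  | succ N ih =>
      rw [Finset.sum_range_succ, ih]
      rcases Nat.even_or_odd N with ⟨M, rfl⟩ | ⟨M, rfl⟩
      · simp only [show (M + M) / 2 = M by omega, show (M + M + 1) / 2 = M by omega,
          show (M + M + 1 + 1) / 2 = M + 1 by omega]
        have := Nat.choose_succ_succ' M k
        omega
      · simp only [show (2 * M + 1) / 2 = M by omega, show (2 * M + 1 + 1) / 2 = M + 1 by omega,
          show (2 * M + 1 + 1 + 1) / 2 = M + 1 by omega]
        have := Nat.choose_succ_succ' (M + 1) k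
        omega

/-- Closed form for the full sum. -/
lemma sum_closed (k : ℕ) (hk : 1 ≤ k) (N : ℕ) :
    ∑ n ∈ Finset.range (2 * N + 1), ((n + 1) / 2 - (n - N)).choose k
      = 2 * ((N / 2 + 1).choose (k + 1) + ((N + 1) / 2).choose (k + 1))
        + ((N + 1) / 2).choose k := by
  have hsplit : ∑ n ∈ Finset.range (2 * N + 1), ((n + 1) / 2 - (n - N)).choose k
      = ∑ n ∈ Finset.range N, ((n + 1) / 2 - (n - N)).choose k
        + ∑ i ∈ Finset.range (N + 1), ((N + i + 1) / 2 - (N + i - N)).choose k := by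
    rw [Finset.range_eq_Ico,
      ← Finset.sum_Ico_consecutive _ (Nat.zero_le N) (by omega : N ≤ 2 * N + 1),
      ← Finset.range_eq_Ico, Finset.sum_Ico_eq_sum_range,
      show 2 * N + 1 - N = N + 1 from by omega]
  rw [hsplit]
  have h1 : ∑ n ∈ Finset.range N, ((n + 1) / 2 - (n - N)).choose k
      = ∑ n ∈ Finset.range N, ((n + 1) / 2).choose k := by
    refine Finset.sum_congr rfl (fun n hn => ?_)
    rw [Finset.mem_range] at hn
    congr 1
    omega
  have h2 : ∑ i ∈ Finset.range (N + 1), ((N + i + 1) / 2 - (N + i - N)).choose k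
      = ∑ i ∈ Finset.range (N + 1), ((N - i + 1) / 2).choose k := by
    refine Finset.sum_congr rfl (fun i hi => ?_)
    rw [Finset.mem_range] at hi
    congr 1
    omega
  have h3 : ∑ i ∈ Finset.range (N + 1), ((N - i + 1) / 2).choose k
      = ∑ i ∈ Finset.range (N + 1), ((i + 1) / 2).choose k := by
    have := Finset.sum_range_reflect (fun m => ((m + 1) / 2).choose k) (N + 1)
    simpa using this
  rw [h1, h2, h3, Finset.sum_range_succ, A_eq k N hk]
  omega

/-- The combinatorial identity: grouping the families of pairs by their common sum. -/
lemma part1 (k : ℕ) (hk : 1 ≤ k) (N : ℕ) :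
    (Finset.filter
        (fun T : Finset (ℕ × ℕ) =>
          (∀ q ∈ T, ∀ q' ∈ T, q.1 + q.2 = q'.1 + q'.2) ∧
          (∀ q ∈ T, ∀ q' ∈ T, q ≠ q' →
            q.1 ≠ q'.1 ∧ q.1 ≠ q'.2 ∧ q.2 ≠ q'.1 ∧ q.2 ≠ q'.2))
        (((Finset.Icc 0 N ×ˢ Finset.Icc 0 N).filter
          (fun q : ℕ × ℕ => q.1 < q.2)).powersetCard k)).card
    = ∑ n ∈ Finset.range (2 * N + 1),
        (((Finset.Icc 0 N ×ˢ Finset.Icc 0 N).filter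
          (fun q : ℕ × ℕ => q.1 < q.2 ∧ q.1 + q.2 = n)).card).choose k := by
  set P : Finset (ℕ × ℕ) := (Finset.Icc 0 N ×ˢ Finset.Icc 0 N).filter
      (fun q : ℕ × ℕ => q.1 < q.2) with hP
  have hPn : ∀ n, P.filter (fun q : ℕ × ℕ => q.1 + q.2 = n)
      = (Finset.Icc 0 N ×ˢ Finset.Icc 0 N).filter
          (fun q : ℕ × ℕ => q.1 < q.2 ∧ q.1 + q.2 = n) := by
    intro n; rw [hP, Finset.filter_filter]
  have key : (Finset.filter
        (fun T : Finset (ℕ × ℕ) =>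
          (∀ q ∈ T, ∀ q' ∈ T, q.1 + q.2 = q'.1 + q'.2) ∧
          (∀ q ∈ T, ∀ q' ∈ T, q ≠ q' →
            q.1 ≠ q'.1 ∧ q.1 ≠ q'.2 ∧ q.2 ≠ q'.1 ∧ q.2 ≠ q'.2))
        (P.powersetCard k))
      = (Finset.range (2 * N + 1)).biUnion
          (fun n => (P.filter (fun q : ℕ × ℕ => q.1 + q.2 = n)).powersetCard k) := by
    ext T
    simp only [Finset.mem_filter, Finset.mem_powersetCard, Finset.mem_biUnion,
      Finset.mem_range]
    constructor
    · rintro ⟨⟨hTP, hcard⟩, hsum, _⟩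
      have hT : T.Nonempty := by
        rw [← Finset.card_pos, hcard]; omega
      obtain ⟨q0, hq0⟩ := hT
      have hq0P := hTP hq0
      have hq0mem : q0.1 ≤ N ∧ q0.2 ≤ N := by
        rw [hP] at hq0P
        simp only [Finset.mem_filter, Finset.mem_product, Finset.mem_Icc] at hq0P
        omega
      refine ⟨q0.1 + q0.2, by omega, ⟨?_, hcard⟩⟩
      intro q hq
      simp only [Finset.mem_filter]
      exact ⟨hTP hq, hsum q hq q0 hq0⟩
    · rintro ⟨n, hn, hTn, hcard⟩
      have hmem : ∀ q ∈ T, q.1 < q.2 ∧ q.1 + q.2 = n := by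
        intro q hq
        have := hTn hq
        rw [hP] at this
        simp only [Finset.mem_filter, Finset.mem_product, Finset.mem_Icc] at this
        exact ⟨this.1.2, this.2⟩
      refine ⟨⟨fun q hq => Finset.filter_subset _ _ (hTn hq), hcard⟩, ?_, ?_⟩
      · intro q hq q' hq'
        rw [(hmem q hq).2, (hmem q' hq').2]
      · intro q hq q' hq' hne
        have h1 := hmem q hq
        have h2 := hmem q' hq'
        have hne' : ¬ (q.1 = q'.1 ∧ q.2 = q'.2) := by
          intro ⟨e1, e2⟩; exact hne (Prod.ext e1 e2)
        omega
  rw [key, Finset.card_biUnion]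
  · refine Finset.sum_congr rfl (fun n _ => ?_)
    rw [Finset.card_powersetCard, hPn]
  · intro n hn m hm hnm
    rw [Function.onFun, Finset.disjoint_left]
    intro T hTn hTm
    simp only [Finset.mem_powersetCard] at hTn hTm
    have hT : T.Nonempty := by rw [← Finset.card_pos, hTn.2]; omega
    obtain ⟨q, hq⟩ := hT
    have h1 := hTn.1 hq
    have h2 := hTm.1 hq
    simp only [Finset.mem_filter] at h1 h2
    exact hnm (h1.2 ▸ h2.2)

/-- `(N + c) / 2 / N → 1 / 2`. -/
lemma half_tendsto (c : ℕ) :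
    Tendsto (fun N : ℕ => (((N + c) / 2 : ℕ) : ℝ) / N) atTop (nhds (1 / 2)) := by
  have h0 : Tendsto (fun N : ℕ => (((N + c) / 2 : ℕ) : ℝ) / N - 1 / 2) atTop (nhds 0) := by
    apply squeeze_zero_norm' (a := fun N : ℕ => ((c : ℝ) + 1) / N)
    · filter_upwards [eventually_ge_atTop 1] with N hN
      have hN' : (0 : ℝ) < N := by exact_mod_cast hN
      have hnat1 : N - 1 ≤ 2 * ((N + c) / 2) := by omega
      have hnat2 : 2 * ((N + c) / 2) ≤ N + c := by omega
      have hc1 : (N : ℝ) - 1 ≤ 2 * (((N + c) / 2 : ℕ) : ℝ) := by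
        have : ((N - 1 : ℕ) : ℝ) ≤ ((2 * ((N + c) / 2) : ℕ) : ℝ) := by exact_mod_cast hnat1
        push_cast at this
        rw [Nat.cast_sub hN] at this
        · linarith
      have hc2 : 2 * (((N + c) / 2 : ℕ) : ℝ) ≤ N + c := by exact_mod_cast hnat2
      have e : (((N + c) / 2 : ℕ) : ℝ) / N - 1 / 2
          = (2 * (((N + c) / 2 : ℕ) : ℝ) - N) / (2 * N) := by
        field_simp
      rw [Real.norm_eq_abs, e, abs_div, abs_of_pos (by linarith : (0:ℝ) < 2 * N)]
      apply div_le_div₀ (by positivity)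
      · rw [abs_le]; constructor <;> linarith
      · exact hN'
      · linarith
    · exact tendsto_const_div_atTop_nhds_zero_nat _
  have := h0.add_const (1 / 2)
  simpa using this

/-- Binomial coefficients asymptotics: if `x N / N → L > 0` then
`(x N).choose j / N ^ j → L ^ j / j!`. -/
lemma choose_tendsto (j : ℕ) (x : ℕ → ℕ) (L : ℝ) (hL : 0 < L)
    (hx : Tendsto (fun N => (x N : ℝ) / N) atTop (nhds L)) :
    Tendsto (fun N => ((x N).choose j : ℝ) / (N : ℝ) ^ j) atTop
      (nhds (L ^ j / (Nat.factorial j))) := by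
  have hprod : Tendsto (fun N : ℕ => (∏ i ∈ range j, ((x N : ℝ) - i) / N) / (j ! : ℝ))
      atTop (nhds (L ^ j / (j ! : ℝ))) := by
    have h1 : Tendsto (fun N : ℕ => ∏ i ∈ range j, ((x N : ℝ) - i) / N) atTop
        (nhds (∏ _i ∈ range j, L)) := by
      apply tendsto_finset_prod
      intro i _
      have h2 := hx.sub (tendsto_const_div_atTop_nhds_zero_nat (i : ℝ))
      rw [sub_zero] at h2
      apply h2.congr
      intro N; rw [sub_div]
    rw [Finset.prod_const, Finset.card_range] at h1
    exact h1.div_const _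
  apply hprod.congr'
  obtain ⟨M, hM⟩ := exists_nat_ge (2 * (j + 1) / L)
  filter_upwards [hx.eventually (eventually_gt_nhds (by linarith : L / 2 < L)),
    eventually_ge_atTop (M + 1)] with N hN1 hN2
  have hNpos : (0 : ℝ) < N := by
    have : (1 : ℕ) ≤ N := by omega
    exact_mod_cast Nat.lt_of_lt_of_le Nat.zero_lt_one this
  have hxN : (j : ℝ) < x N := by
    have hMN : (M : ℝ) < N := by exact_mod_cast (by omega : M < N)
    have h3 : L / 2 * N < (x N : ℝ) := (lt_div_iff₀ hNpos).mp hN1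
    have h4 : L / 2 * N ≥ L / 2 * (2 * (j + 1) / L) := by
      apply mul_le_mul_of_nonneg_left _ (by linarith : (0:ℝ) ≤ L / 2)
      linarith
    have h5 : L / 2 * (2 * (j + 1) / L) = (j : ℝ) + 1 := by field_simp
    linarith
  have hjx : j ≤ x N := by exact_mod_cast hxN.le
  have hdesc : (((x N).descFactorial j : ℕ) : ℝ) = ∏ i ∈ range j, ((x N : ℝ) - i) := by
    rw [Nat.descFactorial_eq_prod_range, Nat.cast_prod]
    refine Finset.prod_congr rfl (fun i hi => ?_)
    rw [Finset.mem_range] at hi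
    rw [Nat.cast_sub (by omega)]
  have hch : ((x N).choose j : ℝ) = (∏ i ∈ range j, ((x N : ℝ) - i)) / (j ! : ℝ) := by
    rw [← hdesc, Nat.descFactorial_eq_factorial_mul_choose, Nat.cast_mul]
    rw [mul_comm, mul_div_assoc, div_self (by positivity : ((j ! : ℕ) : ℝ) ≠ 0), mul_one]
  rw [Finset.prod_div_distrib, Finset.prod_const, Finset.card_range, hch]
  ring

theorem stmt_19 (k : ℕ) (hk : 1 ≤ k)
    (ξ : ℕ → ℕ) (R : ℕ → ℕ → ℕ)
    (hR : ∀ N n, R N n = ((Finset.Icc 0 N ×ˢ Finset.Icc 0 N).filter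
        (fun q : ℕ × ℕ => q.1 < q.2 ∧ q.1 + q.2 = n)).card)
    (hξ : ∀ N, ξ N =
      (Finset.filter
        (fun T : Finset (ℕ × ℕ) =>
          (∀ q ∈ T, ∀ q' ∈ T, q.1 + q.2 = q'.1 + q'.2) ∧
          (∀ q ∈ T, ∀ q' ∈ T, q ≠ q' →
            q.1 ≠ q'.1 ∧ q.1 ≠ q'.2 ∧ q.2 ≠ q'.1 ∧ q.2 ≠ q'.2))
        (((Finset.Icc 0 N ×ˢ Finset.Icc 0 N).filter
          (fun q : ℕ × ℕ => q.1 < q.2)).powersetCard k)).card) :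
    (∀ N : ℕ, ξ N = ∑ n ∈ Finset.range (2 * N + 1), Nat.choose (R N n) k) ∧
    Filter.Tendsto (fun N : ℕ => (ξ N : ℝ) / (N : ℝ) ^ (k + 1))
      Filter.atTop (nhds (4 / (2 ^ (k + 1) * (Nat.factorial (k + 1))))) := by
  constructor
  · intro N
    rw [hξ N, part1 k hk N]
    exact Finset.sum_congr rfl (fun n _ => by rw [hR])
  · have hxi : ∀ N, ξ N
        = 2 * ((N / 2 + 1).choose (k + 1) + ((N + 1) / 2).choose (k + 1))
          + ((N + 1) / 2).choose k := by
      intro N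
      rw [hξ N, part1 k hk N, ← sum_closed k hk N]
      refine Finset.sum_congr rfl (fun n hn => ?_)
      rw [Finset.mem_range] at hn
      rw [card_pairs_eq N n (by omega)]
    have hc1 : Tendsto (fun N : ℕ => ((N / 2 + 1).choose (k + 1) : ℝ) / (N : ℝ) ^ (k + 1))
        atTop (nhds ((1 / 2 : ℝ) ^ (k + 1) / ((k + 1)! : ℝ))) := by
      have hh : ∀ N : ℕ, N / 2 + 1 = (N + 2) / 2 := fun N => by omega
      simp only [hh]
      exact choose_tendsto (k + 1) (fun N => (N + 2) / 2) (1 / 2) (by norm_num) (half_tendsto 2)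
    have hc2 : Tendsto (fun N : ℕ => (((N + 1) / 2).choose (k + 1) : ℝ) / (N : ℝ) ^ (k + 1))
        atTop (nhds ((1 / 2 : ℝ) ^ (k + 1) / ((k + 1)! : ℝ))) :=
      choose_tendsto (k + 1) (fun N => (N + 1) / 2) (1 / 2) (by norm_num) (half_tendsto 1)
    have hc3 : Tendsto (fun N : ℕ => (((N + 1) / 2).choose k : ℝ) / (N : ℝ) ^ (k + 1))
        atTop (nhds 0) := by
      have h := (choose_tendsto k (fun N => (N + 1) / 2) (1 / 2) (by norm_num)
        (half_tendsto 1)).mul tendsto_one_div_atTop_nhds_zero_nat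
      rw [mul_zero] at h
      apply h.congr
      intro N
      rw [pow_succ]
      ring
    have h := ((hc1.add hc2).const_mul (2 : ℝ)).add hc3
    have h2 : Tendsto (fun N : ℕ => (ξ N : ℝ) / (N : ℝ) ^ (k + 1)) atTop
        (nhds (2 * ((1 / 2 : ℝ) ^ (k + 1) / ((k + 1)! : ℝ)
          + (1 / 2 : ℝ) ^ (k + 1) / ((k + 1)! : ℝ)) + 0)) := by
      apply h.congr
      intro N
      rw [hxi N]; push_cast; ring
    convert h2 using 2
    have hf : ((k + 1)! : ℝ) ≠ 0 := by positivity
    have h2p : (2 : ℝ) ^ (k + 1) ≠ 0 := by positivity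
    field_simp
    ring_nf; rw [← mul_pow]; norm_num
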